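/- For all lists U and V over a type α such that U ++ V is nonempty, the cycle of U ++ V equals the stream obtained by prepending the list U to the cycle of V ++ U. (This is the validity of the PGA axiom (X ⧺ Y)^ω = X ⧺ (Y ⧺ X)^ω in the model of finite and eventually periodic infinite sequences.) -/

import Mathlib

/-- The `n`-th tail (suffix) of a stream `s : ℕ → α`: the stream `k ↦ s (n + k)`. -/
def streamTail {α : Type*} (s : ℕ → α) (n : ℕ) : ℕ → α := fun k => s (n + k)

/-- The cycle of a nonempty list `U`: the stream `k ↦ U[k mod |U|]`. -/
def listCycle {α : Type*} (U : List α) (h : 0 < U.length) : ℕ → α :=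
  fun k => U.get ⟨k % U.length, Nat.mod_lt k h⟩

/-- Prepending a list `L` to a stream `s`: the first `|L|` elements are those of `L`,
the remaining elements are those of `s` in order. -/
def listPrepend {α : Type*} (L : List α) (s : ℕ → α) : ℕ → α :=
  fun k => if hk : k < L.length then L.get ⟨k, hk⟩ else s (k - L.length)

/-- `L` is a prefix of the stream `s`: the first `|L|` elements of `s`, in order, form `L`. -/
def isPrefixOfStream {α : Type*} (L : List α) (s : ℕ → α) : Prop :=
  ∀ (i : ℕ) (h : i < L.length), L.get ⟨i, h⟩ = s i

private lemma rot {α : Type*} (U V : List α) (i : ℕ) (h : 0 < (U ++ V).length)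
    (h' : 0 < (V ++ U).length) :
    (U ++ V)[(i + U.length) % (U ++ V).length]'(Nat.mod_lt _ h) =
      (V ++ U)[i % (V ++ U).length]'(Nat.mod_lt _ h') := by
  have hlen : (U ++ V).length = U.length + V.length := List.length_append
  have hlen' : (V ++ U).length = U.length + V.length := by
    rw [List.length_append]; omega
  set n := U.length with hn
  set m := V.length with hm
  set t := n + m with ht
  have hjlt : i % (V ++ U).length < t := by
    have := Nat.mod_lt i h'
    omega
  set j := i % (V ++ U).length with hj
  have hmod : (i + n) % (U ++ V).length = (j + n) % t := by
    rw [hlen]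
    have key : i % t = j % t := by
      rw [Nat.mod_eq_of_lt hjlt, hj, hlen']
    exact Nat.ModEq.add_right n key
  apply Option.some_injective
  rw [← List.getElem?_eq_getElem, ← List.getElem?_eq_getElem, hmod]
  by_cases hc : j < m
  · have h1 : (j + n) % t = j + n := Nat.mod_eq_of_lt (by omega)
    rw [h1, List.getElem?_append_right (by omega), List.getElem?_append_left hc]
    congr 1
    omega
  · have h1 : (j + n) % t = j - m := by
      have h2 : j + n = (j - m) + 1 * t := by omega
      rw [h2, Nat.add_mul_mod_self_right, Nat.mod_eq_of_lt (by omega)]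
    rw [h1, List.getElem?_append_left (by omega),
      List.getElem?_append_right (by omega)]

/-- PGA axiom `(X ⧺ Y)^ω = X ⧺ (Y ⧺ X)^ω`: the cycle of `U ++ V` equals `U` prepended
to the cycle of `V ++ U`. -/
theorem pga_axiom_PGA4 {α : Type*} (U V : List α) (h : 0 < (U ++ V).length)
    (h' : 0 < (V ++ U).length) :
    listCycle (U ++ V) h = listPrepend U (listCycle (V ++ U) h') := by
  funext k
  simp only [listCycle, listPrepend, List.get_eq_getElem]
  by_cases hk : k < U.length
  · rw [dif_pos hk]
    have h1 : k % (U ++ V).length = k := Nat.mod_eq_of_lt (by simp; omega)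
    simp only [h1]
    rw [List.getElem_append_left hk]
  · rw [dif_neg hk]
    have key := rot U V (k - U.length) h h'
    have h2 : (k - U.length + U.length) = k := by omega
    rw [h2] at key
    exact key
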